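/- Suppose ½‖e‖² has the form of the weighted sum ‖b‖₂² = Σ_{k=−N/2}^{N/2−1} (η/(1+ηk²))² |r_k|², where |r_k|² = (m²π²/18)·((1+(−1)^{m+k})η^{−1}k² + (1−(−1)^{m+k})η^{−2})/N⁴. Then ‖b‖₂² ~ (m²π³/(18√η))·N^{−4} as √η N → ∞ and η → 0, in the sense that the sum Σ_k (η/(1+ηk²))²·(m²π²/(18N⁴))·((1+(−1)^{m+k})η^{−1}k² + (1−(−1)^{m+k})η^{−2}) equals (m²π³/(18√η))N^{−4}(1 + o(1)). -/

import Mathlib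

open Real Filter

open MeasureTheory Topology

-- sum over Icc in ZZ to range
lemma sumIccRange (u : ℤ → ℝ) (a : ℤ) : ∀ (n : ℕ),
    ∑ k ∈ Finset.Icc a (a + n - 1), u k = ∑ i ∈ Finset.range n, u (a + i) := by
  intro n
  induction n with
  | zero => simp [Finset.Icc_eq_empty_of_lt]
  | succ n ih =>
    have h1 : Finset.Icc a (a + (n+1:ℕ) - 1) = insert (a + n) (Finset.Icc a (a + n - 1)) := by
      ext x; simp only [Finset.mem_Icc, Finset.mem_insert]; push_cast; omega
    rw [h1, Finset.sum_insert (by simp only [Finset.mem_Icc]; omega), ih,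
      Finset.sum_range_succ]
    ring

lemma sumPair (u : ℕ → ℝ) : ∀ (M : ℕ),
    ∑ i ∈ Finset.range (2*M), u i = ∑ j ∈ Finset.range M, (u (2*j) + u (2*j+1)) := by
  intro M
  induction M with
  | zero => simp
  | succ M ih =>
    have : 2*(M+1) = (2*M) + 1 + 1 := by ring
    rw [this, Finset.sum_range_succ, Finset.sum_range_succ, ih, Finset.sum_range_succ]; ring

lemma denom_pos {η : ℝ} (hη : 0 < η) (x : ℝ) : 0 < 1 + η * x ^ 2 := by
  nlinarith [sq_nonneg x, hη]

lemma hasDeriv_G {η : ℝ} (hη : 0 < η) (x : ℝ) :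
    HasDerivAt (fun y => Real.arctan (Real.sqrt η * y) / Real.sqrt η)
      (1 / (1 + η * x ^ 2)) x := by
  have ht : (0:ℝ) < Real.sqrt η := Real.sqrt_pos.2 hη
  have ht2 : Real.sqrt η ^ 2 = η := Real.sq_sqrt hη.le
  have h1 : HasDerivAt (fun y => Real.sqrt η * y) (Real.sqrt η) x := by
    simpa using (hasDerivAt_id x).const_mul (Real.sqrt η)
  have h2 := (Real.hasDerivAt_arctan (Real.sqrt η * x)).comp x h1
  have h3 := h2.div_const (Real.sqrt η)
  refine h3.congr_deriv ?_
  have hd := (denom_pos hη x).ne'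
  rw [mul_pow, ht2]
  rw [mul_div_assoc, div_self ht.ne', mul_one]

lemma g_cont {η : ℝ} (hη : 0 < η) : Continuous fun x : ℝ => 1 / (1 + η * x ^ 2) := by
  apply Continuous.div continuous_const (by continuity)
  intro x; exact (denom_pos hη x).ne'

lemma integral_g {η : ℝ} (hη : 0 < η) (a b : ℝ) :
    ∫ x in a..b, 1 / (1 + η * x ^ 2)
      = (Real.arctan (Real.sqrt η * b) - Real.arctan (Real.sqrt η * a)) / Real.sqrt η := by
  rw [intervalIntegral.integral_eq_sub_of_hasDerivAt
    (fun x _ => hasDeriv_G hη x) ((g_cont hη).intervalIntegrable a b)]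
  ring

lemma g_anti {η : ℝ} (hη : 0 < η) {x₀ : ℝ} (hx0 : 0 ≤ x₀) (s : Set ℝ) (hs : s ⊆ Set.Ici x₀) :
    AntitoneOn (fun x : ℝ => 1 / (1 + η * x ^ 2)) s := by
  intro x hx y hy hxy
  have hx' : (0:ℝ) ≤ x := le_trans hx0 (hs hx)
  have h1 := denom_pos hη x
  have h2 := denom_pos hη y
  simp only
  apply one_div_le_one_div_of_le h1
  nlinarith [mul_self_le_mul_self hx' hxy, sq_nonneg x, sq_nonneg y, mul_le_mul_of_nonneg_left (mul_self_le_mul_self hx' hxy) hη.le]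

lemma hasDeriv_f {η : ℝ} (hη : 0 < η) (x : ℝ) :
    HasDerivAt (fun x => (η * x ^ 2 - 1) / (1 + η * x ^ 2) ^ 2)
      ((2 * η * x * (3 - η * x ^ 2)) / (1 + η * x ^ 2) ^ 3) x := by
  have hd := denom_pos hη x
  have hu : HasDerivAt (fun x : ℝ => η * x ^ 2 - 1) (2 * η * x) x := by
    have := ((hasDerivAt_pow 2 x).const_mul η).sub_const 1
    refine this.congr_deriv ?_; push_cast; ring
  have hv : HasDerivAt (fun x : ℝ => (1 + η * x ^ 2) ^ 2)
      (2 * (1 + η * x ^ 2) * (2 * η * x)) x := by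
    have h0 : HasDerivAt (fun x : ℝ => 1 + η * x ^ 2) (2 * η * x) x := by
      have := ((hasDerivAt_pow 2 x).const_mul η).const_add 1
      refine this.congr_deriv ?_; push_cast; ring
    have := h0.pow 2
    refine this.congr_deriv ?_; push_cast; ring
  have hv0 : (1 + η * x ^ 2) ^ 2 ≠ 0 := by positivity
  have := hu.div hv hv0
  refine this.congr_deriv ?_
  rw [div_eq_div_iff (by positivity) (by positivity)]
  ring

lemma fprime_bound {η : ℝ} (hη : 0 < η) (x : ℝ) :
    |(2 * η * x * (3 - η * x ^ 2)) / (1 + η * x ^ 2) ^ 3|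
      ≤ 3 * Real.sqrt η * (1 / (1 + η * x ^ 2)) := by
  have hd := denom_pos hη x
  have ht : (0:ℝ) < Real.sqrt η := Real.sqrt_pos.2 hη
  have ht2 : Real.sqrt η ^ 2 = η := Real.sq_sqrt hη.le
  set s : ℝ := Real.sqrt η * x with hs
  have hsx : η * x ^ 2 = s ^ 2 := by rw [hs, mul_pow, ht2]
  have hkey : |2 * η * x * (3 - η * x ^ 2)| ≤ 3 * Real.sqrt η * (1 + η * x ^ 2) ^ 2 := by
    have h1 : 2 * η * x * (3 - η * x ^ 2) = Real.sqrt η * (2 * s * (3 - s ^ 2)) := by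
      have h4 : Real.sqrt η ^ 4 = η ^ 2 := by rw [show (4:ℕ)=2*2 by rfl, pow_mul, ht2]
      rw [hs]; ring_nf; rw [ht2, h4]; ring
    rw [h1, abs_mul, abs_of_pos ht, hsx]
    have h2 : |2 * s * (3 - s ^ 2)| ≤ 3 * (1 + s ^ 2) ^ 2 := by
      rw [abs_le]
      constructor
      · nlinarith [sq_nonneg (s+1), sq_nonneg (s^2-s), sq_nonneg s, sq_nonneg (s^2)]
      · nlinarith [sq_nonneg (s-1), sq_nonneg (s^2+s), sq_nonneg s, sq_nonneg (s^2)]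
    calc Real.sqrt η * |2 * s * (3 - s ^ 2)| ≤ Real.sqrt η * (3 * (1 + s ^ 2) ^ 2) := by
          exact mul_le_mul_of_nonneg_left h2 ht.le
      _ = 3 * Real.sqrt η * (1 + s ^ 2) ^ 2 := by ring
  rw [abs_div, abs_of_pos (by positivity : (0:ℝ) < (1 + η * x ^ 2) ^ 3)]
  rw [div_le_iff₀ (by positivity)]
  calc |2 * η * x * (3 - η * x ^ 2)| ≤ 3 * Real.sqrt η * (1 + η * x ^ 2) ^ 2 := hkey
    _ = 3 * Real.sqrt η * (1 / (1 + η * x ^ 2)) * (1 + η * x ^ 2) ^ 3 := by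
        field_simp

lemma fprime_cont {η : ℝ} (hη : 0 < η) :
    Continuous fun x : ℝ => (2 * η * x * (3 - η * x ^ 2)) / (1 + η * x ^ 2) ^ 3 := by
  apply Continuous.div (by continuity) (by continuity)
  intro x; positivity

lemma fdiff_bound {η : ℝ} (hη : 0 < η) {a b : ℝ} (hab : a ≤ b) :
    |(η * b ^ 2 - 1) / (1 + η * b ^ 2) ^ 2 - (η * a ^ 2 - 1) / (1 + η * a ^ 2) ^ 2|
      ≤ ∫ x in a..b, 3 * Real.sqrt η * (1 / (1 + η * x ^ 2)) := by
  have hint : IntervalIntegrable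
      (fun x : ℝ => (2 * η * x * (3 - η * x ^ 2)) / (1 + η * x ^ 2) ^ 3) volume a b :=
    (fprime_cont hη).intervalIntegrable a b
  rw [← intervalIntegral.integral_eq_sub_of_hasDerivAt (fun x _ => hasDeriv_f hη x) hint]
  calc |∫ x in a..b, (2 * η * x * (3 - η * x ^ 2)) / (1 + η * x ^ 2) ^ 3|
      ≤ ∫ x in a..b, |(2 * η * x * (3 - η * x ^ 2)) / (1 + η * x ^ 2) ^ 3| :=
        intervalIntegral.abs_integral_le_integral_abs hab
    _ ≤ ∫ x in a..b, 3 * Real.sqrt η * (1 / (1 + η * x ^ 2)) := by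
        apply intervalIntegral.integral_mono_on hab
          ((fprime_cont hη).abs.intervalIntegrable a b)
          ((continuous_const.mul (g_cont hη)).intervalIntegrable a b)
        intro x _
        exact fprime_bound hη x

lemma Bbound {η : ℝ} (hη : 0 < η) (M : ℕ) (e : ℤ) :
    |∑ i ∈ Finset.range (2*M), (-1:ℝ)^(e + (i:ℤ)) *
        ((η * ((i:ℝ) - M)^2 - 1) / (1 + η * ((i:ℝ) - M)^2)^2)|
      ≤ 3 * π := by
  have ht : (0:ℝ) < Real.sqrt η := Real.sqrt_pos.2 hη
  set t := Real.sqrt η with htdef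
  set G : ℝ → ℝ := fun x => 3 * t * (1 / (1 + η * x ^ 2)) with hG
  have hGc : Continuous G := continuous_const.mul (g_cont hη)
  have hGnn : ∀ x, 0 ≤ G x := by
    intro x; have := denom_pos hη x; positivity
  set a : ℕ → ℝ := fun j => 2*(j:ℝ) - M with ha
  have hstep : ∀ j ∈ Finset.range M,
      |(-1:ℝ)^(e + ((2*j:ℕ):ℤ)) * ((η * (((2*j:ℕ):ℝ) - M)^2 - 1) / (1 + η * (((2*j:ℕ):ℝ) - M)^2)^2)
        + (-1:ℝ)^(e + ((2*j+1:ℕ):ℤ)) * ((η * (((2*j+1:ℕ):ℝ) - M)^2 - 1) / (1 + η * (((2*j+1:ℕ):ℝ) - M)^2)^2)|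
      ≤ ∫ x in (a j)..(a (j+1)), G x := by
    intro j _
    set x : ℝ := 2*(j:ℝ) - M with hx
    set y : ℝ := x + 1 with hy
    have hxy : x ≤ y := by simp [hy]
    have hc1 : ((2*j:ℕ):ℝ) - M = x := by push_cast [hx]; ring
    have hc2 : ((2*j+1:ℕ):ℝ) - M = y := by push_cast [hx, hy]; ring
    have hsgn : (-1:ℝ)^(e + ((2*j+1:ℕ):ℤ)) = -(-1:ℝ)^(e + ((2*j:ℕ):ℤ)) := by
      push_cast
      rw [show e + (2*(j:ℤ)+1) = (e + 2*j) + 1 by ring,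
        zpow_add₀ (by norm_num : (-1:ℝ) ≠ 0)]
      simp
    rw [hc1, hc2, hsgn]
    have habs : |(-1:ℝ)^(e + ((2*j:ℕ):ℤ))| = 1 := by
      rcases Int.even_or_odd (e + ((2*j:ℕ):ℤ)) with h | h
      · rw [h.neg_one_zpow, abs_one]
      · rw [h.neg_one_zpow, abs_neg, abs_one]
    have hrw : (-1:ℝ)^(e + ((2*j:ℕ):ℤ)) * ((η * x^2 - 1) / (1 + η * x^2)^2)
        + (-(-1:ℝ)^(e + ((2*j:ℕ):ℤ))) * ((η * y^2 - 1) / (1 + η * y^2)^2)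
        = (-1:ℝ)^(e + ((2*j:ℕ):ℤ)) *
          ((η * x^2 - 1) / (1 + η * x^2)^2 - (η * y^2 - 1) / (1 + η * y^2)^2) := by ring
    rw [hrw, abs_mul, habs, one_mul, abs_sub_comm]
    calc |(η * y^2 - 1) / (1 + η * y^2)^2 - (η * x^2 - 1) / (1 + η * x^2)^2|
        ≤ ∫ u in x..y, G u := fdiff_bound hη hxy
      _ ≤ ∫ u in (a j)..(a (j+1)), G u := by
          have hb : y ≤ a (j+1) := by
            rw [hy, hx]; simp only [ha]; push_cast; linarith
          have hc : a j ≤ x := le_of_eq (by rw [hx])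
          exact intervalIntegral.integral_mono_interval hc hxy hb
            (Eventually.of_forall hGnn) (hGc.intervalIntegrable _ _)
  calc |∑ i ∈ Finset.range (2*M), (-1:ℝ)^(e + (i:ℤ)) *
          ((η * ((i:ℝ) - M)^2 - 1) / (1 + η * ((i:ℝ) - M)^2)^2)|
      = |∑ j ∈ Finset.range M, ((-1:ℝ)^(e + ((2*j:ℕ):ℤ)) *
          ((η * (((2*j:ℕ):ℝ) - M)^2 - 1) / (1 + η * (((2*j:ℕ):ℝ) - M)^2)^2)
        + (-1:ℝ)^(e + ((2*j+1:ℕ):ℤ)) *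
          ((η * (((2*j+1:ℕ):ℝ) - M)^2 - 1) / (1 + η * (((2*j+1:ℕ):ℝ) - M)^2)^2))| := by
        rw [sumPair (fun i => (-1:ℝ)^(e + (i:ℤ)) *
          ((η * ((i:ℝ) - M)^2 - 1) / (1 + η * ((i:ℝ) - M)^2)^2)) M]
    _ ≤ ∑ j ∈ Finset.range M, |(-1:ℝ)^(e + ((2*j:ℕ):ℤ)) *
          ((η * (((2*j:ℕ):ℝ) - M)^2 - 1) / (1 + η * (((2*j:ℕ):ℝ) - M)^2)^2)
        + (-1:ℝ)^(e + ((2*j+1:ℕ):ℤ)) *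
          ((η * (((2*j+1:ℕ):ℝ) - M)^2 - 1) / (1 + η * (((2*j+1:ℕ):ℝ) - M)^2)^2)| :=
        Finset.abs_sum_le_sum_abs _ _
    _ ≤ ∑ j ∈ Finset.range M, ∫ x in (a j)..(a (j+1)), G x := Finset.sum_le_sum hstep
    _ = ∫ x in (a 0)..(a M), G x :=
        intervalIntegral.sum_integral_adjacent_intervals
          (fun k _ => hGc.intervalIntegrable _ _)
    _ ≤ 3 * π := by
        have h0 : a 0 = -(M:ℝ) := by simp [ha]
        have hM : a M = (M:ℝ) := by simp [ha]; ring
        rw [h0, hM, hG]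
        rw [intervalIntegral.integral_const_mul, integral_g hη, ← htdef]
        have h1 : Real.arctan (t * M) < π/2 := Real.arctan_lt_pi_div_two _
        have h2 : -(π/2) < Real.arctan (t * (-(M:ℝ))) := Real.neg_pi_div_two_lt_arctan _
        calc 3 * t * ((Real.arctan (t * M) - Real.arctan (t * (-(M:ℝ)))) / t)
            = 3 * (Real.arctan (t * M) - Real.arctan (t * (-(M:ℝ)))) := by
              field_simp
          _ ≤ 3 * π := by nlinarith

lemma reflect_eq {η : ℝ} (M : ℕ) :
    ∑ i ∈ Finset.range M, 1 / (1 + η * ((i:ℝ) - M) ^ 2)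
      = ∑ j ∈ Finset.range M, 1 / (1 + η * ((j:ℝ) + 1) ^ 2) := by
  rw [← Finset.sum_range_reflect (fun i => 1 / (1 + η * ((i:ℝ) - M) ^ 2)) M]
  apply Finset.sum_congr rfl
  intro j hj
  have hjM : j + 1 ≤ M := Finset.mem_range.1 hj
  have hcast : ((M - 1 - j : ℕ) : ℝ) = (M:ℝ) - (j+1) := by
    rw [Nat.sub_sub, Nat.cast_sub (by omega : 1 + j ≤ M)]
    push_cast; ring
  rw [hcast]
  congr 1
  ring

lemma Abounds {η : ℝ} (hη : 0 < η) {M : ℕ} (hM : 1 ≤ M) :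
    2 * Real.arctan (Real.sqrt η * M) - 2 * Real.arctan (Real.sqrt η)
      ≤ Real.sqrt η * ∑ i ∈ Finset.range (2*M), 1 / (1 + η * ((i:ℝ) - M) ^ 2)
    ∧ Real.sqrt η * ∑ i ∈ Finset.range (2*M), 1 / (1 + η * ((i:ℝ) - M) ^ 2)
      ≤ Real.sqrt η + π := by
  have ht : (0:ℝ) < Real.sqrt η := Real.sqrt_pos.2 hη
  set t := Real.sqrt η with htdef
  set g : ℝ → ℝ := fun x => 1 / (1 + η * x ^ 2) with hg
  -- split the sum
  have hsplit : ∑ i ∈ Finset.range (2*M), g ((i:ℝ) - M)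
      = (∑ j ∈ Finset.range M, g ((j:ℝ) + 1)) + ∑ i ∈ Finset.range M, g (i:ℝ) := by
    rw [two_mul, Finset.sum_range_add]
    congr 1
    · exact reflect_eq M
    · apply Finset.sum_congr rfl; intro i _
      simp only [hg]; congr 1; push_cast; ring
  -- generic upper bound
  have hSU : ∀ k : ℕ, ∑ i ∈ Finset.range k, g ((i:ℝ)+1) ≤ Real.arctan (t*k) / t := by
    intro k
    have hanti : AntitoneOn g (Set.Icc (0:ℝ) (0 + k)) :=
      g_anti hη le_rfl _ (fun x hx => hx.1)
    have h := hanti.sum_le_integral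
    have hval : ∫ x in (0:ℝ)..(0 + k), g x = Real.arctan (t*k) / t := by
      rw [hg, integral_g hη, ← htdef, mul_zero, Real.arctan_zero, zero_add]
      ring
    calc ∑ i ∈ Finset.range k, g ((i:ℝ)+1)
        = ∑ i ∈ Finset.range k, g (0 + ((i + 1 : ℕ):ℝ)) := by
          apply Finset.sum_congr rfl; intro i _; congr 1; push_cast; ring
      _ ≤ ∫ x in (0:ℝ)..(0 + k), g x := h
      _ = Real.arctan (t*k) / t := hval
  -- generic lower bound
  have hSL : ∀ k : ℕ, (Real.arctan (t*k) - Real.arctan t) / t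
      ≤ ∑ i ∈ Finset.range k, g ((i:ℝ)+1) := by
    intro k
    have hanti : AntitoneOn g (Set.Icc (1:ℝ) (1 + k)) :=
      g_anti hη zero_le_one _ (fun x hx => hx.1)
    have h := hanti.integral_le_sum
    have hval : ∫ x in (1:ℝ)..(1 + k), g x
        = (Real.arctan (t*(1+k)) - Real.arctan t) / t := by
      rw [hg, integral_g hη, ← htdef, mul_one]
    have hmono : Real.arctan (t*k) ≤ Real.arctan (t*(1+k)) := by
      apply Real.arctan_strictMono.monotone; nlinarith
    calc (Real.arctan (t*k) - Real.arctan t) / t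
        ≤ (Real.arctan (t*(1+k)) - Real.arctan t) / t := by
          apply div_le_div_of_nonneg_right ?h ht.le
          case h => linarith
      _ = ∫ x in (1:ℝ)..(1 + k), g x := hval.symm
      _ ≤ ∑ i ∈ Finset.range k, g (1 + (i:ℝ)) := by
          convert h using 2 with i
      _ = ∑ i ∈ Finset.range k, g ((i:ℝ)+1) := by
          apply Finset.sum_congr rfl; intro i _; congr 1; ring
  -- pointwise comparison g(i) ≥ g(i+1)
  have hgstep : ∀ i : ℕ, g ((i:ℝ)+1) ≤ g (i:ℝ) := by
    intro i
    have h1 := denom_pos hη ((i:ℝ))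
    have h2 := denom_pos hη ((i:ℝ)+1)
    simp only [hg]
    apply one_div_le_one_div_of_le h1
    have : (0:ℝ) ≤ (i:ℝ) := Nat.cast_nonneg i
    nlinarith
  obtain ⟨n, rfl⟩ : ∃ n, M = n + 1 := ⟨M - 1, (Nat.succ_pred_eq_of_pos hM).symm⟩
  set M := n + 1 with hMdef
  have hS0U : ∑ i ∈ Finset.range M, g (i:ℝ) ≤ 1 + Real.arctan (t*n) / t := by
    rw [Finset.sum_range_succ']
    have hg0 : g ((0:ℕ):ℝ) = 1 := by simp [hg]
    rw [hg0]
    have := hSU n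
    have heq : ∑ i ∈ Finset.range n, g (((i+1:ℕ)):ℝ) = ∑ i ∈ Finset.range n, g ((i:ℝ)+1) := by
      apply Finset.sum_congr rfl; intro i _; congr 1; push_cast; ring
    rw [heq]
    linarith
  have hS0L : ∑ i ∈ Finset.range M, g ((i:ℝ)+1) ≤ ∑ i ∈ Finset.range M, g (i:ℝ) :=
    Finset.sum_le_sum (fun i _ => hgstep i)
  have harc1 : Real.arctan (t*M) < π/2 := Real.arctan_lt_pi_div_two _
  have harc2 : Real.arctan (t*n) < π/2 := Real.arctan_lt_pi_div_two _
  have harc3 : 0 ≤ Real.arctan t := by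
    rw [← Real.arctan_zero]; exact Real.arctan_strictMono.monotone ht.le
  have hU := hSU M
  have hL := hSL M
  rw [hsplit]
  constructor
  · have h1 : (Real.arctan (t*M) - Real.arctan t) / t ≤ ∑ i ∈ Finset.range M, g (i:ℝ) :=
      le_trans hL hS0L
    have h2 : (Real.arctan (t*M) - Real.arctan t) / t * t = Real.arctan (t*M) - Real.arctan t :=
      div_mul_cancel₀ _ ht.ne'
    nlinarith [hSL M]
  · have h2 : Real.arctan (t*M) / t * t = Real.arctan (t*M) := div_mul_cancel₀ _ ht.ne'
    have h3 : Real.arctan (t*n) / t * t = Real.arctan (t*n) := div_mul_cancel₀ _ ht.ne'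
    nlinarith [hSU M, hS0U]

lemma term_eq {η : ℝ} (hη : 0 < η) (c ε x P : ℝ) (hP : P ≠ 0) :
    (η / (1 + η * x^2))^2 * (c * ((1+ε)*η⁻¹*x^2 + (1-ε)*η⁻¹^2) / P)
      = c/P * (1/(1+η*x^2) + ε * ((η*x^2 - 1)/(1+η*x^2)^2)) := by
  have hd := (denom_pos hη x).ne'
  field_simp
  ring

/-- the weighted spectral sum `‖b‖₂²` satisfies
`‖b‖₂² ~ (m²π³/(18√η)) N⁻⁴` in the joint limit `η → 0`, `√η N → ∞`. -/
theorem stmt_17 (m : ℕ) (hm : 0 < m)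
    (S : ℝ → ℕ → ℝ)
    (hS : ∀ (η : ℝ) (N : ℕ), S η N =
      ∑ k ∈ Finset.Icc (-(N : ℤ) / 2) ((N : ℤ) / 2 - 1),
        (η / (1 + η * (k : ℝ) ^ 2)) ^ 2 *
          (((m : ℝ) ^ 2 * π ^ 2 / 18) *
            ((1 + (-1 : ℝ) ^ ((m : ℤ) + k)) * η⁻¹ * (k : ℝ) ^ 2 +
              (1 - (-1 : ℝ) ^ ((m : ℤ) + k)) * η⁻¹ ^ 2) / (N : ℝ) ^ 4)) :
    ∀ (ηs : ℕ → ℝ) (Ns : ℕ → ℕ),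
      (∀ j, 0 < ηs j) → (∀ j, 0 < Ns j) → (∀ j, Even (Ns j)) →
      Tendsto ηs atTop (nhds 0) →
      Tendsto (fun j => Real.sqrt (ηs j) * (Ns j : ℝ)) atTop atTop →
      Tendsto (fun j => S (ηs j) (Ns j) /
          (((m : ℝ) ^ 2 * π ^ 3 / (18 * Real.sqrt (ηs j))) / (Ns j : ℝ) ^ 4))
        atTop (nhds 1) := by
  intro ηs Ns hηpos hNpos hNeven hη0 hηN
  set t : ℕ → ℝ := fun j => Real.sqrt (ηs j) with htdef
  have ht : ∀ j, 0 < t j := fun j => Real.sqrt_pos.2 (hηpos j)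
  set M : ℕ → ℕ := fun j => Ns j / 2 with hMdef
  have hNM : ∀ j, Ns j = 2 * M j := by
    intro j
    obtain ⟨r, hr⟩ := hNeven j
    simp only [hMdef]; omega
  have hM1 : ∀ j, 1 ≤ M j := by
    intro j; have := hNpos j; rw [hNM j] at this; omega
  set c : ℝ := (m:ℝ)^2 * π^2 / 18 with hcdef
  have hc : 0 < c := by
    have : (0:ℝ) < (m:ℝ) := Nat.cast_pos.2 hm
    positivity
  set A : ℕ → ℝ := fun j =>
    ∑ i ∈ Finset.range (2 * M j), 1 / (1 + ηs j * ((i:ℝ) - M j) ^ 2) with hAdef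
  set B : ℕ → ℝ := fun j =>
    ∑ i ∈ Finset.range (2 * M j), (-1:ℝ)^(((m:ℤ) - M j) + (i:ℤ)) *
       ((ηs j * ((i:ℝ) - M j)^2 - 1) / (1 + ηs j * ((i:ℝ) - M j)^2)^2) with hBdef
  have hNr : ∀ j, (0:ℝ) < (Ns j : ℝ) := fun j => Nat.cast_pos.2 (hNpos j)
  -- value of S
  have hSval : ∀ j, S (ηs j) (Ns j) = c / (Ns j : ℝ)^4 * (A j + B j) := by
    intro j
    rw [hS]
    have hIcc : (-(Ns j : ℤ) / 2) = -(M j : ℤ) := by rw [hNM j]; push_cast; omega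
    have hIcc2 : ((Ns j : ℤ) / 2 - 1) = -(M j : ℤ) + (2 * M j : ℕ) - 1 := by
      rw [hNM j]; push_cast; omega
    rw [hIcc, hIcc2, sumIccRange _ (-(M j : ℤ)) (2 * M j)]
    rw [hAdef, hBdef]
    simp only
    rw [← Finset.sum_add_distrib, Finset.mul_sum]
    apply Finset.sum_congr rfl
    intro i _
    have hx : ((-(M j : ℤ) + (i:ℤ) : ℤ) : ℝ) = (i:ℝ) - M j := by push_cast; ring
    have hexp : (m : ℤ) + (-(M j : ℤ) + (i:ℤ)) = ((m:ℤ) - M j) + (i:ℤ) := by ring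
    rw [hx, hexp]
    have := term_eq (hηpos j) c ((-1:ℝ)^(((m:ℤ) - M j) + (i:ℤ))) ((i:ℝ) - M j)
      ((Ns j : ℝ)^4) (pow_ne_zero 4 (hNr j).ne')
    rw [this]
  -- ratio simplification
  have hratio : ∀ j, S (ηs j) (Ns j) /
      (((m : ℝ) ^ 2 * π ^ 3 / (18 * t j)) / (Ns j : ℝ) ^ 4)
      = (t j * A j + t j * B j) / π := by
    intro j
    rw [hSval j]
    have hπ : (0:ℝ) < π := Real.pi_pos
    have hm' : (0:ℝ) < (m:ℝ) := Nat.cast_pos.2 hm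
    have hN4 : (0:ℝ) < (Ns j:ℝ)^4 := pow_pos (hNr j) 4
    rw [hcdef]
    have hN0 : (Ns j : ℝ) ≠ 0 := (hNr j).ne'
    field_simp
  have heq : (fun j => S (ηs j) (Ns j) /
      (((m : ℝ) ^ 2 * π ^ 3 / (18 * Real.sqrt (ηs j))) / (Ns j : ℝ) ^ 4))
      = fun j => (t j * A j + t j * B j) / π := funext hratio
  rw [heq]
  -- limits
  have htlim : Tendsto t atTop (𝓝 0) := by
    have := (Real.continuous_sqrt.tendsto 0).comp hη0
    simpa [htdef, Function.comp_def] using this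
  have htM : Tendsto (fun j => t j * (M j : ℝ)) atTop atTop := by
    have h2 : Tendsto (fun j => (t j * (Ns j : ℝ))/2) atTop atTop :=
      hηN.atTop_div_const (by norm_num)
    apply h2.congr
    intro j
    rw [hNM j]; push_cast; ring
  have harcM : Tendsto (fun j => Real.arctan (t j * M j)) atTop (𝓝 (π/2)) :=
    ((Real.tendsto_arctan_atTop.mono_right nhdsWithin_le_nhds).comp htM)
  have harct : Tendsto (fun j => Real.arctan (t j)) atTop (𝓝 0) := by
    have := (Real.continuous_arctan.tendsto 0).comp htlim
    simpa [Real.arctan_zero, Function.comp_def] using this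
  have hA : Tendsto (fun j => t j * A j) atTop (𝓝 π) := by
    have hlow : Tendsto (fun j => 2 * Real.arctan (t j * M j) - 2 * Real.arctan (t j))
        atTop (𝓝 π) := by
      have := (harcM.const_mul 2).sub (harct.const_mul 2)
      convert this using 2
      ring
    have hup : Tendsto (fun j => t j + π) atTop (𝓝 π) := by
      have := htlim.add_const π
      convert this using 2
      norm_num
    exact tendsto_of_tendsto_of_tendsto_of_le_of_le hlow hup
      (fun j => (Abounds (hηpos j) (hM1 j)).1) (fun j => (Abounds (hηpos j) (hM1 j)).2)
  have hB : Tendsto (fun j => t j * B j) atTop (𝓝 0) := by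
    refine squeeze_zero_norm (a := fun j => (3 * π) * t j) (fun j => ?_) ?_
    · rw [Real.norm_eq_abs, abs_mul, abs_of_pos (ht j)]
      calc t j * |B j| ≤ t j * (3 * π) := by
            apply mul_le_mul_of_nonneg_left _ (ht j).le
            exact Bbound (hηpos j) (M j) ((m:ℤ) - M j)
        _ = (3 * π) * t j := by ring
    · have := htlim.const_mul (3 * π)
      simpa using this
  have := (hA.add hB).div_const π
  simp only [add_zero] at this
  convert this using 2
  rw [div_self Real.pi_ne_zero]
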